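/- Let ξ = (ξ₁, ξ₂) ∈ ℝ² be nonzero and set k = √(ξ₁² + ξ₂²). For any constants a, a₁, a₂, b₁, b₂, c ∈ ℂ, the functions X(ρ) = a·exp(−kρ) + (i/k)(b₁ξ₁ + b₂ξ₂)·ρ·exp(−kρ) + c·((3/10)kρ² + ρ)·exp(−kρ) and X_A(ρ) = a_A·exp(−kρ) + b_A·ρ·exp(−kρ) − (3/10)·i·c·ξ_A·ρ²·exp(−kρ) for A = 1, 2, satisfy the shift Lopatinskij–Shapiro ODE system E₀''(ρ) − k²E₀(ρ) = 0 and E_A''(ρ) − k²E_A(ρ) = 0 (A = 1, 2) for all ρ ∈ ℝ. -/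

import Mathlib

open Complex


/-- Quadratic polynomial times exponential. -/
noncomputable def pe (c₀ c₁ c₂ μ : ℂ) : ℝ → ℂ :=
  fun ρ => (c₀ + c₁ * ρ + c₂ * (ρ : ℂ) ^ 2) * Complex.exp (μ * ρ)

lemma pe_hasDerivAt (c₀ c₁ c₂ μ : ℂ) (ρ : ℝ) :
    HasDerivAt (pe c₀ c₁ c₂ μ) (pe (c₁ + μ * c₀) (2 * c₂ + μ * c₁) (μ * c₂) μ ρ) ρ := by
  have h : HasDerivAt (fun z : ℂ => (c₀ + c₁ * z + c₂ * z ^ 2) * Complex.exp (μ * z))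
      (((c₁ + μ * c₀) + (2 * c₂ + μ * c₁) * ρ + (μ * c₂) * (ρ : ℂ) ^ 2) *
        Complex.exp (μ * ρ)) (ρ : ℂ) := by
    have h1 : HasDerivAt (fun z : ℂ => c₀ + c₁ * z + c₂ * z ^ 2)
        (c₁ + c₂ * (2 * (ρ : ℂ))) (ρ : ℂ) := by
      have := ((hasDerivAt_pow 2 (ρ : ℂ)).const_mul c₂).const_add
        (c₀ + c₁ * (ρ : ℂ))
      simpa [Pi.add_def] using (((hasDerivAt_id (ρ : ℂ)).const_mul c₁).const_add c₀).add
        ((hasDerivAt_pow 2 (ρ : ℂ)).const_mul c₂)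
    have h2 : HasDerivAt (fun z : ℂ => Complex.exp (μ * z))
        (μ * Complex.exp (μ * ρ)) (ρ : ℂ) := by
      simpa [mul_comm] using ((hasDerivAt_id (ρ : ℂ)).const_mul μ).cexp
    have := h1.mul h2
    exact this.congr_deriv (by ring)
  exact h.comp_ofReal

lemma deriv_pe (c₀ c₁ c₂ μ : ℂ) :
    deriv (pe c₀ c₁ c₂ μ) = pe (c₁ + μ * c₀) (2 * c₂ + μ * c₁) (μ * c₂) μ :=
  funext fun ρ => (pe_hasDerivAt c₀ c₁ c₂ μ ρ).deriv

lemma pe_ode (e₀ : ℂ) (k : ℝ) (ρ : ℝ) :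
    deriv (deriv (pe e₀ 0 0 (-(k : ℂ)))) ρ - (k : ℂ) ^ 2 * pe e₀ 0 0 (-(k : ℂ)) ρ = 0 := by
  rw [deriv_pe, deriv_pe]
  simp only [pe]
  ring





/-- The quantity `E₀ = 4X'' − k²X + 3i(ξ₁X₁' + ξ₂X₂')` from the principal part of the
shift component of the approximate Killing vector equation. -/
noncomputable def shiftE0 (k ξ₁ ξ₂ : ℝ) (X X₁ X₂ : ℝ → ℂ) : ℝ → ℂ :=
  fun ρ => 4 * deriv (deriv X) ρ - (k : ℂ) ^ 2 * X ρ
    + 3 * Complex.I * ((ξ₁ : ℂ) * deriv X₁ ρ + (ξ₂ : ℂ) * deriv X₂ ρ)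

/-- The quantity `E_A = X_A'' − k²X_A + 3iξ_A(X' + i(ξ₁X₁ + ξ₂X₂))` for `A = 1, 2`. -/
noncomputable def shiftEA (k ξA ξ₁ ξ₂ : ℝ) (X XA X₁ X₂ : ℝ → ℂ) : ℝ → ℂ :=
  fun ρ => deriv (deriv XA) ρ - (k : ℂ) ^ 2 * XA ρ
    + 3 * Complex.I * (ξA : ℂ) * (deriv X ρ + Complex.I * ((ξ₁ : ℂ) * X₁ ρ + (ξ₂ : ℂ) * X₂ ρ))

/-- The shift Lopatinskij–Shapiro ODE system: `E₀'' − k²E₀ = 0` and `E_A'' − k²E_A = 0`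
for `A = 1, 2`, at the point `ρ`. -/
def shiftLS (k ξ₁ ξ₂ : ℝ) (X X₁ X₂ : ℝ → ℂ) (ρ : ℝ) : Prop :=
  deriv (deriv (shiftE0 k ξ₁ ξ₂ X X₁ X₂)) ρ
      - (k : ℂ) ^ 2 * shiftE0 k ξ₁ ξ₂ X X₁ X₂ ρ = 0 ∧
  deriv (deriv (shiftEA k ξ₁ ξ₁ ξ₂ X X₁ X₁ X₂)) ρ
      - (k : ℂ) ^ 2 * shiftEA k ξ₁ ξ₁ ξ₂ X X₁ X₁ X₂ ρ = 0 ∧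
  deriv (deriv (shiftEA k ξ₂ ξ₁ ξ₂ X X₂ X₁ X₂)) ρ
      - (k : ℂ) ^ 2 * shiftEA k ξ₂ ξ₁ ξ₂ X X₂ X₁ X₂ ρ = 0

/-- The lapse component `X(ρ) = a·e^{−kρ} + (i/k)(b₁ξ₁ + b₂ξ₂)·ρ·e^{−kρ}
   + c·((3/10)kρ² + ρ)·e^{−kρ}` of the stable solution family. -/
noncomputable def shiftXstable (k ξ₁ ξ₂ : ℝ) (a b₁ b₂ c : ℂ) : ℝ → ℂ :=
  fun ρ => a * Complex.exp (-(k : ℂ) * ρ)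
    + (Complex.I / (k : ℂ)) * (b₁ * (ξ₁ : ℂ) + b₂ * (ξ₂ : ℂ)) * (ρ : ℂ) * Complex.exp (-(k : ℂ) * ρ)
    + c * ((3 / 10) * (k : ℂ) * (ρ : ℂ) ^ 2 + (ρ : ℂ)) * Complex.exp (-(k : ℂ) * ρ)

/-- The components `X_A(ρ) = a_A·e^{−kρ} + b_A·ρ·e^{−kρ} − (3/10)i·c·ξ_A·ρ²·e^{−kρ}`
of the stable solution family, `A = 1, 2`. -/
noncomputable def shiftXAstable (k ξA : ℝ) (aA bA c : ℂ) : ℝ → ℂ :=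
  fun ρ => aA * Complex.exp (-(k : ℂ) * ρ) + bA * (ρ : ℂ) * Complex.exp (-(k : ℂ) * ρ)
    - (3 / 10) * Complex.I * c * (ξA : ℂ) * (ρ : ℂ) ^ 2 * Complex.exp (-(k : ℂ) * ρ)

lemma shiftXstable_eq (k ξ₁ ξ₂ : ℝ) (a b₁ b₂ c : ℂ) :
    shiftXstable k ξ₁ ξ₂ a b₁ b₂ c =
      pe a ((Complex.I / (k : ℂ)) * (b₁ * ξ₁ + b₂ * ξ₂) + c) ((3 / 10) * (k : ℂ) * c)
        (-(k : ℂ)) := by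
  funext ρ
  simp only [shiftXstable, pe, neg_mul]
  ring

lemma shiftXAstable_eq (k ξA : ℝ) (aA bA c : ℂ) :
    shiftXAstable k ξA aA bA c =
      pe aA bA (-((3 / 10) * Complex.I * c * (ξA : ℂ))) (-(k : ℂ)) := by
  funext ρ
  simp only [shiftXAstable, pe, neg_mul]
  ring

lemma shiftE0_eq (k ξ₁ ξ₂ : ℝ) (a a₁ a₂ b₁ b₂ c : ℂ)
    (hk0 : (k : ℂ) ≠ 0)
    (hk2 : (k : ℂ) ^ 2 = (ξ₁ : ℂ) ^ 2 + (ξ₂ : ℂ) ^ 2) :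
    shiftE0 k ξ₁ ξ₂ (shiftXstable k ξ₁ ξ₂ a b₁ b₂ c)
      (shiftXAstable k ξ₁ a₁ b₁ c) (shiftXAstable k ξ₂ a₂ b₂ c) =
    pe (3 * (k : ℂ) ^ 2 * a - (28 / 5) * k * c - 5 * Complex.I * (b₁ * ξ₁ + b₂ * ξ₂)
        - 3 * Complex.I * k * (a₁ * ξ₁ + a₂ * ξ₂)) 0 0 (-(k : ℂ)) := by
  have hki : (k : ℂ) * (k : ℂ)⁻¹ = 1 := mul_inv_cancel₀ hk0
  funext ρ
  simp only [shiftE0, shiftXstable_eq, shiftXAstable_eq, deriv_pe, pe]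
  linear_combination ((-(9/5 : ℂ) * c * ρ + (9/10) * k * c * (ρ:ℂ) ^ 2) *
      Complex.exp (-(k : ℂ) * ρ)) * hk2
    + (((9/10 : ℂ) * k * c * (ρ:ℂ)^2 - (9/5) * c * ρ) * ((ξ₁:ℂ)^2 + (ξ₂:ℂ)^2) *
      Complex.exp (-(k : ℂ) * ρ)) * Complex.I_sq
    + ((3 * (k:ℂ) * Complex.I * (b₁ * ξ₁ + b₂ * ξ₂) * ρ
        - 8 * Complex.I * (b₁ * ξ₁ + b₂ * ξ₂)) * Complex.exp (-(k : ℂ) * ρ)) * hki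

lemma shiftEA_eq (k ξA ξ₁ ξ₂ : ℝ) (a aA a₁ a₂ bA b₁ b₂ c : ℂ)
    (hk0 : (k : ℂ) ≠ 0)
    (hk2 : (k : ℂ) ^ 2 = (ξ₁ : ℂ) ^ 2 + (ξ₂ : ℂ) ^ 2) :
    shiftEA k ξA ξ₁ ξ₂ (shiftXstable k ξ₁ ξ₂ a b₁ b₂ c)
      (shiftXAstable k ξA aA bA c)
      (shiftXAstable k ξ₁ a₁ b₁ c) (shiftXAstable k ξ₂ a₂ b₂ c) =
    pe (-(3 / 5) * Complex.I * c * ξA - 2 * k * bA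
        + 3 * Complex.I * (ξA : ℂ) * ((Complex.I / (k : ℂ)) * (b₁ * ξ₁ + b₂ * ξ₂) + c
          - k * a + Complex.I * (a₁ * ξ₁ + a₂ * ξ₂))) 0 0 (-(k : ℂ)) := by
  have hki : (k : ℂ) * (k : ℂ)⁻¹ = 1 := mul_inv_cancel₀ hk0
  funext ρ
  simp only [shiftEA, shiftXstable_eq, shiftXAstable_eq, deriv_pe, pe]
  linear_combination (-(9/10 : ℂ) * Complex.I * c * (ξA:ℂ) * (ρ:ℂ)^2 *
      Complex.exp (-(k : ℂ) * ρ)) * hk2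
    + (-(9/10 : ℂ) * Complex.I * c * (ξA:ℂ) * (ρ:ℂ)^2 * ((ξ₁:ℂ)^2 + (ξ₂:ℂ)^2) *
      Complex.exp (-(k : ℂ) * ρ)) * Complex.I_sq
    + (-3 * Complex.I^2 * (ξA:ℂ) * (ρ:ℂ) * (b₁ * ξ₁ + b₂ * ξ₂) *
      Complex.exp (-(k : ℂ) * ρ)) * hki

/-- the stable family solves the shift Lopatinskij–Shapiro ODE system. -/
theorem shift_LS_stable_family_solves (ξ₁ ξ₂ : ℝ) (hξ : ξ₁ ≠ 0 ∨ ξ₂ ≠ 0)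
    (k : ℝ) (hk : k = Real.sqrt (ξ₁ ^ 2 + ξ₂ ^ 2))
    (a a₁ a₂ b₁ b₂ c : ℂ) :
    ∀ ρ : ℝ, shiftLS k ξ₁ ξ₂
      (shiftXstable k ξ₁ ξ₂ a b₁ b₂ c)
      (shiftXAstable k ξ₁ a₁ b₁ c)
      (shiftXAstable k ξ₂ a₂ b₂ c) ρ := by
  intro ρ
  have hs : 0 < ξ₁ ^ 2 + ξ₂ ^ 2 := by
    rcases hξ with h | h <;> positivity
  have hkpos : 0 < k := hk ▸ Real.sqrt_pos.mpr hs
  have hk2r : k ^ 2 = ξ₁ ^ 2 + ξ₂ ^ 2 := by rw [hk]; exact Real.sq_sqrt hs.le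
  have hk2 : (k : ℂ) ^ 2 = (ξ₁ : ℂ) ^ 2 + (ξ₂ : ℂ) ^ 2 := by exact_mod_cast hk2r
  have hk0 : (k : ℂ) ≠ 0 := by exact_mod_cast hkpos.ne'
  refine ⟨?_, ?_, ?_⟩
  · rw [shiftE0_eq k ξ₁ ξ₂ a a₁ a₂ b₁ b₂ c hk0 hk2]
    exact pe_ode _ k ρ
  · rw [shiftEA_eq k ξ₁ ξ₁ ξ₂ a a₁ a₁ a₂ b₁ b₁ b₂ c hk0 hk2]
    exact pe_ode _ k ρ
  · rw [shiftEA_eq k ξ₂ ξ₁ ξ₂ a a₂ a₁ a₂ b₂ b₁ b₂ c hk0 hk2]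
    exact pe_ode _ k ρ
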